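/- Let a_1, …, a_n ∈ ℤ^d be finitely many lattice vectors and let u ∈ ℤ^d. Then u belongs to the real convex cone ℝ_{≥0}a_1 + ⋯ + ℝ_{≥0}a_n ⊆ ℝ^d (i.e., u = Σ_j c_j a_j for some c_1, …, c_n ∈ ℝ_{≥0}) if and only if there exists an integer m ≥ 1 such that m·u lies in the submonoid ℕa_1 + ⋯ + ℕa_n of ℤ^d generated by a_1, …, a_n. -/

import Mathlib

open Finset

/-- Conic Carathéodory: a nonnegative combination can be re-expressed over a
linearly independent subfamily with nonnegative coefficients. -/
lemma coneCara {ι V : Type*} [DecidableEq ι] [AddCommGroup V] [Module ℝ V]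
    (v : ι → V) (x : V) :
    ∀ t : Finset ι, ∀ c : ι → ℝ, (∀ j ∈ t, 0 ≤ c j) → x = ∑ j ∈ t, c j • v j →
    ∃ t' : Finset ι, t' ⊆ t ∧ LinearIndependent ℝ (fun j : {y // y ∈ t'} => v j.1) ∧
      ∃ c' : ι → ℝ, (∀ j ∈ t', 0 ≤ c' j) ∧ x = ∑ j ∈ t', c' j • v j := by
  intro t
  induction t using Finset.strongInduction with
  | _ t ih =>
    intro c hc hx
    by_cases hli : LinearIndependent ℝ (fun j : {y // y ∈ t} => v j.1)
    · exact ⟨t, Finset.Subset.refl t, hli, c, hc, hx⟩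
    · -- get a nontrivial relation
      obtain ⟨g, hg0, j₁, hj₁⟩ := Fintype.not_linearIndependent_iff.mp hli
      set w : ι → ℝ := fun j => if h : j ∈ t then g ⟨j, h⟩ else 0 with hwdef
      have hw0 : ∑ j ∈ t, w j • v j = 0 := by
        rw [← Finset.sum_attach t (fun j => w j • v j)]
        calc ∑ j ∈ t.attach, w j.1 • v j.1 = ∑ j ∈ t.attach, g j • v j.1 := by
              refine Finset.sum_congr rfl fun j _ => ?_
              simp [hwdef, j.2]
          _ = 0 := hg0
      have key : ∀ w' : ι → ℝ, (∑ j ∈ t, w' j • v j = 0) → (∃ j ∈ t, 0 < w' j) →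
          ∃ t' : Finset ι, t' ⊆ t ∧
            LinearIndependent ℝ (fun j : {y // y ∈ t'} => v j.1) ∧
            ∃ c' : ι → ℝ, (∀ j ∈ t', 0 ≤ c' j) ∧ x = ∑ j ∈ t', c' j • v j := by
        intro w' hw'0 hpos
        obtain ⟨j₂, hj₂t, hj₂pos⟩ := hpos
        have hTne : (t.filter (fun j => 0 < w' j)).Nonempty :=
          ⟨j₂, Finset.mem_filter.mpr ⟨hj₂t, hj₂pos⟩⟩
        obtain ⟨j₀, hj₀T, hmin⟩ :=
          Finset.exists_min_image (t.filter (fun j => 0 < w' j)) (fun j => c j / w' j) hTne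
        obtain ⟨hj₀t, hj₀pos⟩ := Finset.mem_filter.mp hj₀T
        set lam : ℝ := c j₀ / w' j₀ with hlam
        have hlam0 : 0 ≤ lam := div_nonneg (hc j₀ hj₀t) hj₀pos.le
        set c' : ι → ℝ := fun j => c j - lam * w' j with hc'def
        have hc'nn : ∀ j ∈ t, 0 ≤ c' j := by
          intro j hj
          rcases le_or_gt (w' j) 0 with h | h
          · have : lam * w' j ≤ 0 := mul_nonpos_of_nonneg_of_nonpos hlam0 h
            simp only [hc'def]; linarith [hc j hj]
          · have := hmin j (Finset.mem_filter.mpr ⟨hj, h⟩)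
            have : lam * w' j ≤ c j := by
              rw [← le_div_iff₀ h]; exact this
            simp only [hc'def]; linarith
        have hc'j₀ : c' j₀ = 0 := by
          simp only [hc'def, hlam]
          field_simp
          ring
        have hx' : x = ∑ j ∈ t, c' j • v j := by
          simp only [hc'def, sub_smul, mul_smul]
          rw [Finset.sum_sub_distrib, ← Finset.smul_sum, hw'0, smul_zero, sub_zero]
          exact hx
        have hx'' : x = ∑ j ∈ t.erase j₀, c' j • v j := by
          rw [hx']
          exact (Finset.sum_erase t (by rw [hc'j₀, zero_smul])).symm
        obtain ⟨t', ht'sub, ht'li, d', hd'nn, hd'x⟩ :=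
          ih (t.erase j₀) (Finset.erase_ssubset hj₀t) c'
            (fun j hj => hc'nn j (Finset.mem_of_mem_erase hj)) hx''
        exact ⟨t', ht'sub.trans (Finset.erase_subset _ _), ht'li, d', hd'nn, hd'x⟩
      have hwj₁ : w j₁.1 ≠ 0 := by
        simpa [hwdef, j₁.2] using hj₁
      rcases hwj₁.lt_or_gt with h | h
      · refine key (-w) ?_ ⟨j₁.1, j₁.2, by simpa using h⟩
        simp only [Pi.neg_apply, neg_smul, Finset.sum_neg_distrib]
        rw [hw0, neg_zero]
      · exact key w hw0 ⟨j₁.1, j₁.2, h⟩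

theorem stmt_9 {d n : ℕ} (a : Fin n → (Fin d → ℤ)) (u : Fin d → ℤ) :
    (∃ c : Fin n → ℝ, (∀ j, 0 ≤ c j) ∧
        (fun i => (u i : ℝ)) = ∑ j, c j • (fun i => (a j i : ℝ))) ↔
      (∃ m : ℕ, 1 ≤ m ∧ ∃ p : Fin n → ℕ, m • u = ∑ j, p j • a j) := by
  constructor
  · rintro ⟨c, hc, hx⟩
    obtain ⟨t', -, hli, c', hc', hx'⟩ :=
      coneCara (fun j => (fun i => (a j i : ℝ))) _ Finset.univ c (fun j _ => hc j) hx
    set aq : Fin n → (Fin d → ℚ) := fun j i => (a j i : ℚ) with haq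
    set uq : Fin d → ℚ := fun i => (u i : ℚ) with huq
    set W := Submodule.span ℚ (Set.range (fun j : {y // y ∈ t'} => aq j.1)) with hW
    have hu_pt : ∀ i, (u i : ℝ) = ∑ j ∈ t', c' j * (a j i : ℝ) := by
      intro i
      have := congrFun hx' i
      simpa [Finset.sum_apply] using this
    have huqW : uq ∈ W := by
      by_contra hns
      obtain ⟨f, hfu, hfW⟩ := Submodule.exists_dual_map_eq_bot_of_notMem hns inferInstance
      set wv : Fin d → ℚ := fun i => f (fun k => if i = k then 1 else 0) with hwv
      have hfeval : ∀ v : Fin d → ℚ, f v = ∑ i, v i * wv i := by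
        intro v
        conv_lhs => rw [pi_eq_sum_univ v]
        rw [map_sum]
        exact Finset.sum_congr rfl fun i _ => by rw [map_smul, smul_eq_mul]
      have hfa : ∀ j ∈ t', ∑ i, (a j i : ℝ) * ((wv i : ℝ)) = 0 := by
        intro j hj
        have hmem : aq j ∈ W := Submodule.subset_span ⟨⟨j, hj⟩, rfl⟩
        have h1 : f (aq j) ∈ W.map f := Submodule.mem_map_of_mem hmem
        rw [hfW] at h1
        have h2 : ∑ i, aq j i * wv i = 0 := by rw [← hfeval]; simpa using h1
        have := congrArg (fun r : ℚ => (r : ℝ)) h2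
        push_cast at this
        simpa [haq] using this
      have hzero : ((f uq : ℚ) : ℝ) = 0 := by
        rw [hfeval uq]
        push_cast
        calc ∑ i, (u i : ℝ) * ((wv i : ℝ))
            = ∑ i, (∑ j ∈ t', c' j * (a j i : ℝ)) * ((wv i : ℝ)) := by
              exact Finset.sum_congr rfl fun i _ => by rw [← hu_pt i]
          _ = ∑ j ∈ t', c' j * ∑ i, (a j i : ℝ) * ((wv i : ℝ)) := by
              simp_rw [Finset.sum_mul, Finset.mul_sum]
              rw [Finset.sum_comm]
              exact Finset.sum_congr rfl fun j _ =>
                Finset.sum_congr rfl fun i _ => by ring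
          _ = 0 := Finset.sum_eq_zero fun j hj => by rw [hfa j hj, mul_zero]
      exact hfu (by exact_mod_cast hzero)
    obtain ⟨q, hq⟩ := (Submodule.mem_span_range_iff_exists_fun ℚ).mp huqW
    have hq_pt : ∀ i, ∑ j : {y // y ∈ t'}, q j * (a j.1 i : ℚ) = (u i : ℚ) := by
      intro i
      have := congrFun hq i
      simpa [Finset.sum_apply, haq, huq] using this
    -- coefficients agree with the real ones, hence are nonnegative
    have hcoef : ∀ j : {y // y ∈ t'}, ((q j : ℝ)) = c' j.1 := by
      have h0 : ∑ j : {y // y ∈ t'}, ((q j : ℝ) - c' j.1) • (fun i => (a j.1 i : ℝ))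
          = (0 : Fin d → ℝ) := by
        funext i
        simp only [Finset.sum_apply, Pi.smul_apply, smul_eq_mul, Pi.zero_apply]
        have h1 : ∑ j : {y // y ∈ t'}, (q j : ℝ) * (a j.1 i : ℝ) = (u i : ℝ) := by
          exact_mod_cast congrArg (fun r : ℚ => (r : ℝ)) (hq_pt i)
        have h2 : ∑ j : {y // y ∈ t'}, c' j.1 * (a j.1 i : ℝ) = (u i : ℝ) := by
          rw [Finset.univ_eq_attach, Finset.sum_attach t' (fun j => c' j * (a j i : ℝ))]
          exact (hu_pt i).symm
        calc ∑ j : {y // y ∈ t'}, ((q j : ℝ) - c' j.1) * (a j.1 i : ℝ)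
            = (∑ j : {y // y ∈ t'}, (q j : ℝ) * (a j.1 i : ℝ))
              - ∑ j : {y // y ∈ t'}, c' j.1 * (a j.1 i : ℝ) := by
              rw [← Finset.sum_sub_distrib]
              exact Finset.sum_congr rfl fun j _ => by ring
          _ = 0 := by rw [h1, h2, sub_self]
      intro j
      have := Fintype.linearIndependent_iff.mp hli _ h0 j
      linarith [this]
    have hqnn : ∀ j : {y // y ∈ t'}, 0 ≤ q j := by
      intro j
      have h1 : (0 : ℝ) ≤ (q j : ℝ) := by rw [hcoef j]; exact hc' j.1 j.2
      exact_mod_cast h1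
    -- clear denominators
    set m : ℕ := ∏ j : {y // y ∈ t'}, (q j).den with hm
    have hm1 : 1 ≤ m := Nat.one_le_iff_ne_zero.mpr <|
      Finset.prod_ne_zero_iff.mpr fun j _ => (q j).den_nz
    have hdvd : ∀ j : {y // y ∈ t'}, (q j).den ∣ m :=
      fun j => Finset.dvd_prod_of_mem _ (Finset.mem_univ j)
    set z : {y // y ∈ t'} → ℤ := fun j => (q j).num * ((m / (q j).den : ℕ) : ℤ) with hz
    have hzq : ∀ j, ((z j : ℚ)) = (m : ℚ) * q j := by
      intro j
      have hden : ((q j).den : ℚ) ≠ 0 := Nat.cast_ne_zero.mpr (q j).den_nz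
      have h1 : ((q j).num : ℚ) = q j * ((q j).den : ℚ) :=
        (div_eq_iff hden).mp (Rat.num_div_den (q j))
      have h2 : ((q j).den : ℚ) * ((m / (q j).den : ℕ) : ℚ) = (m : ℚ) := by
        exact_mod_cast (Nat.mul_div_cancel' (hdvd j))
      simp only [hz]
      rw [Int.cast_mul, Int.cast_natCast, h1]
      linear_combination q j * h2
    have hznn : ∀ j, 0 ≤ z j := fun j =>
      mul_nonneg (Rat.num_nonneg.mpr (hqnn j)) (Int.ofNat_nonneg _)
    classical
    set p : Fin n → ℕ := fun j => if h : j ∈ t' then (z ⟨j, h⟩).toNat else 0 with hp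
    refine ⟨m, hm1, p, ?_⟩
    funext i
    have key : (m : ℚ) * (u i : ℚ) = ∑ j, (p j : ℚ) * (a j i : ℚ) := by
      have hR : ∑ j, (p j : ℚ) * (a j i : ℚ) = ∑ j ∈ t', (p j : ℚ) * (a j i : ℚ) :=
        (Finset.sum_subset t'.subset_univ fun j _ hj => by
          simp [hp, dif_neg hj]).symm
      rw [hR, ← Finset.sum_attach t' (fun j => (p j : ℚ) * (a j i : ℚ)),
        ← Finset.univ_eq_attach, eq_comm]
      have : ∀ j : {y // y ∈ t'}, (p j.1 : ℚ) = (m : ℚ) * q j := by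
        intro j
        rw [hp]
        simp only [dif_pos j.2]
        rw [← hzq j]
        exact_mod_cast congrArg (fun z : ℤ => (z : ℚ)) (Int.toNat_of_nonneg (hznn j))
      calc ∑ j : {y // y ∈ t'}, (p j.1 : ℚ) * (a j.1 i : ℚ)
          = ∑ j : {y // y ∈ t'}, (m : ℚ) * (q j * (a j.1 i : ℚ)) := by
            exact Finset.sum_congr rfl fun j _ => by rw [this j]; ring
        _ = (m : ℚ) * ∑ j : {y // y ∈ t'}, q j * (a j.1 i : ℚ) := by
            rw [Finset.mul_sum]
        _ = (m : ℚ) * (u i : ℚ) := by rw [hq_pt i]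
    have lhs : (m • u) i = (m : ℤ) * u i := by simp [mul_comm]
    have rhs : (∑ j, p j • a j) i = ∑ j, (p j : ℤ) * a j i := by
      simp [Finset.sum_apply, mul_comm]
    rw [lhs, rhs]
    exact_mod_cast key
  · rintro ⟨m, hm, p, hp⟩
    have hm0 : (m : ℝ) ≠ 0 := by positivity
    refine ⟨fun j => (p j : ℝ) / m, fun j => by positivity, ?_⟩
    funext i
    have hpi : (m : ℤ) * u i = ∑ j, (p j : ℤ) * a j i := by
      have := congrFun hp i
      simpa [Finset.sum_apply] using this
    have hcast : (m : ℝ) * (u i : ℝ) = ∑ j, (p j : ℝ) * (a j i : ℝ) := by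
      exact_mod_cast congrArg (fun z : ℤ => (z : ℝ)) hpi
    simp only [Finset.sum_apply, Pi.smul_apply, smul_eq_mul]
    rw [eq_comm]
    calc ∑ j, (p j : ℝ) / m * (a j i : ℝ)
        = (∑ j, (p j : ℝ) * (a j i : ℝ)) / m := by
          rw [Finset.sum_div]; exact Finset.sum_congr rfl fun j _ => by ring
      _ = (u i : ℝ) := by rw [← hcast]; field_simp
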